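/- arXiv:1010.4612 — 4 statements merged into one kernel-verified Lean document; each statement's English description precedes it below -/
import Mathlib

section
/- Let x ∈ ℝ^N, let x_k be its best k-term approximation supported on T0 with |T0| = k, and let T̃ ⊆ {1,…,N} be a support estimate with |T̃| = ρk and |T̃ ∩ T0| = αρk. Let A be an n×N real matrix, let y = Ax + e with ‖e‖₂ ≤ ε, and suppose there exists a real a with ak an integer, a ≥ (1−α)ρ, a > 1, such that the restricted isometry constants of A satisfy δ_{ak} + (a/γ²)·δ_{(a+1)k} < a/γ² − 1, where γ = ω + (1−ω)·√(1+ρ−2αρ) for some 0 ≤ ω ≤ 1. Then any solution x* of the weighted ℓ1 minimization problem minimize ‖z‖_{1,w} subject to ‖Az − y‖₂ ≤ ε (with weights w_i = ω for i ∈ T̃, w_i = 1 otherwise) — equivalently, any x* with ‖Ax* − y‖₂ ≤ ε and ‖x*‖_{1,w} ≤ ‖x‖_{1,w} — satisfies ‖x* − x‖₂ ≤ C0′·ε + C1′·k^{−1/2}·(ω·‖x − x_k‖₁ + (1−ω)·‖x_{T̃ᶜ∩T0ᶜ}‖₁), where C0′ = 2(1 + γ/√a)/(√(1−δ_{(a+1)k})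 − (γ/√a)·√(1+δ_{ak})) and C1′ = 2a^{−1/2}(√(1−δ_{(a+1)k}) + √(1+δ_{ak}))/(√(1−δ_{(a+1)k}) − (γ/√a)·√(1+δ_{ak})). -/
open scoped BigOperators

noncomputable section

/-- The ℓ1 norm of a finite real vector. -/
def l1norm {ι : Type*} [Fintype ι] (v : ι → ℝ) : ℝ := ∑ i, |v i|

/-- The Euclidean (ℓ2) norm of a finite real vector. -/
def l2norm {ι : Type*} [Fintype ι] (v : ι → ℝ) : ℝ := Real.sqrt (∑ i, (v i) ^ 2)

/-- The ℓ∞ norm of a finite real vector. -/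
def linfnorm {ι : Type*} [Fintype ι] (v : ι → ℝ) : ℝ := ⨆ i, |v i|

/-- The weighted ℓ1 norm `‖v‖_{1,w} = ∑ i, w i * |v i|`. -/
def wl1norm {ι : Type*} [Fintype ι] (w v : ι → ℝ) : ℝ := ∑ i, w i * |v i|

/-- `restrict v S` is the vector equal to `v` on `S` and zero outside `S`. -/
def restrict {ι : Type*} [DecidableEq ι] (v : ι → ℝ) (S : Finset ι) : ι → ℝ :=
  fun i => if i ∈ S then v i else 0

/-- A vector is `m`-sparse if it has at most `m` nonzero entries. -/
def IsSparse {ι : Type*} [Fintype ι] (m : ℕ) (v : ι → ℝ) : Prop :=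
  (Finset.univ.filter (fun i => v i ≠ 0)).card ≤ m

/-- The restricted isometry constant `δ_m` of a matrix `A`: the smallest `δ ≥ 0` such
that `(1-δ)‖u‖₂² ≤ ‖Au‖₂² ≤ (1+δ)‖u‖₂²` for every `m`-sparse vector `u`. -/
def ripConst {n N : ℕ} (A : Matrix (Fin n) (Fin N) ℝ) (m : ℕ) : ℝ :=
  sInf {δ : ℝ | 0 ≤ δ ∧ ∀ u : Fin N → ℝ, IsSparse m u →
    (1 - δ) * (∑ i, (u i) ^ 2) ≤ (∑ j, (A.mulVec u j) ^ 2) ∧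
    (∑ j, (A.mulVec u j) ^ 2) ≤ (1 + δ) * (∑ i, (u i) ^ 2)}

end

section Helpers
open Finset

lemma l2norm_nonneg {ι : Type*} [Fintype ι] (v : ι → ℝ) : 0 ≤ l2norm v := Real.sqrt_nonneg _

lemma l2norm_eq_norm {ι : Type*} [Fintype ι] (v : ι → ℝ) :
    l2norm v = ‖(EuclideanSpace.equiv ι ℝ).symm v‖ := by
  rw [l2norm, EuclideanSpace.norm_eq]
  simp [Real.norm_eq_abs, sq_abs]

lemma l2norm_sum_le {ι κ : Type*} [Fintype ι] (s : Finset κ) (f : κ → ι → ℝ) :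
    l2norm (∑ j ∈ s, f j) ≤ ∑ j ∈ s, l2norm (f j) := by
  simp only [l2norm_eq_norm]
  rw [show (EuclideanSpace.equiv ι ℝ).symm (∑ j ∈ s, f j)
      = ∑ j ∈ s, (EuclideanSpace.equiv ι ℝ).symm (f j) from map_sum _ _ _]
  exact norm_sum_le _ _

lemma l2norm_add_le {ι : Type*} [Fintype ι] (u v : ι → ℝ) :
    l2norm (u + v) ≤ l2norm u + l2norm v := by
  simp only [l2norm_eq_norm]
  rw [show (EuclideanSpace.equiv ι ℝ).symm (u + v)
      = (EuclideanSpace.equiv ι ℝ).symm u + (EuclideanSpace.equiv ι ℝ).symm v from map_add _ _ _]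
  exact norm_add_le _ _

lemma l2norm_neg {ι : Type*} [Fintype ι] (v : ι → ℝ) : l2norm (-v) = l2norm v := by
  simp [l2norm]

end Helpers

section RIP
open Finset

variable {n N : ℕ} (A : Matrix (Fin n) (Fin N) ℝ)

lemma ripSet_nonempty (m : ℕ) : ∃ δ : ℝ, δ ∈ {δ : ℝ | 0 ≤ δ ∧ ∀ u : Fin N → ℝ, IsSparse m u →
    (1 - δ) * (∑ i, (u i) ^ 2) ≤ (∑ j, (A.mulVec u j) ^ 2) ∧
    (∑ j, (A.mulVec u j) ^ 2) ≤ (1 + δ) * (∑ i, (u i) ^ 2)} := by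
  classical
  set C : ℝ := ∑ j, ∑ i, (A j i) ^ 2 with hC
  have hC0 : 0 ≤ C := Finset.sum_nonneg fun j _ => Finset.sum_nonneg fun i _ => sq_nonneg _
  refine ⟨1 + C, ⟨by linarith, fun u _ => ?_⟩⟩
  have hu0 : (0:ℝ) ≤ ∑ i, (u i) ^ 2 := Finset.sum_nonneg fun i _ => sq_nonneg _
  have hAu : (∑ j, (A.mulVec u j) ^ 2) ≤ C * ∑ i, (u i) ^ 2 := by
    rw [hC, Finset.sum_mul]
    refine Finset.sum_le_sum fun j _ => ?_
    simpa [Matrix.mulVec, dotProduct] using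
      Finset.sum_mul_sq_le_sq_mul_sq Finset.univ (fun i => A j i) u
  constructor
  · have : (1 - (1 + C)) * (∑ i, (u i) ^ 2) ≤ 0 := by nlinarith
    exact this.trans (Finset.sum_nonneg fun j _ => sq_nonneg _)
  · nlinarith

lemma ripConst_nonneg (m : ℕ) : 0 ≤ ripConst A m :=
  le_csInf (ripSet_nonempty A m) fun δ hδ => hδ.1

lemma ripConst_spec (m : ℕ) (u : Fin N → ℝ) (hu : IsSparse m u) :
    (1 - ripConst A m) * (∑ i, (u i) ^ 2) ≤ (∑ j, (A.mulVec u j) ^ 2) ∧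
    (∑ j, (A.mulVec u j) ^ 2) ≤ (1 + ripConst A m) * (∑ i, (u i) ^ 2) := by
  have hu0 : (0:ℝ) ≤ ∑ i, (u i) ^ 2 := Finset.sum_nonneg fun i _ => sq_nonneg _
  have key : ∀ η : ℝ, 0 < η →
      (1 - ripConst A m) * (∑ i, (u i) ^ 2) ≤ (∑ j, (A.mulVec u j) ^ 2) + η ∧
      (∑ j, (A.mulVec u j) ^ 2) ≤ (1 + ripConst A m) * (∑ i, (u i) ^ 2) + η := by
    intro η hη
    rcases eq_or_lt_of_le hu0 with h0 | h0
    · have hAu0 : (0:ℝ) ≤ ∑ j, (A.mulVec u j) ^ 2 := Finset.sum_nonneg fun j _ => sq_nonneg _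
      rcases ripSet_nonempty A m with ⟨δ, hδ⟩
      have h2 := hδ.2 u hu
      constructor
      · rw [← h0] at *; nlinarith
      · rw [← h0] at *; nlinarith [h2.2]
    · have hlt : ripConst A m < ripConst A m + η / (∑ i, (u i) ^ 2) := by
        have := div_pos hη h0; linarith
      obtain ⟨δ, hδ, hδlt⟩ := exists_lt_of_csInf_lt (Set.nonempty_def.mpr (ripSet_nonempty A m)) hlt
      have h2 := hδ.2 u hu
      have hfrac : (ripConst A m + η / (∑ i, (u i) ^ 2)) * (∑ i, (u i) ^ 2)
          = ripConst A m * (∑ i, (u i) ^ 2) + η := by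
        field_simp
      constructor
      · nlinarith [h2.1, mul_lt_mul_of_pos_right hδlt h0]
      · nlinarith [h2.2, mul_lt_mul_of_pos_right hδlt h0]
  constructor
  · refine le_of_forall_pos_le_add fun η hη => (key η hη).1
  · refine le_of_forall_pos_le_add fun η hη => (key η hη).2

end RIP

section Blocks
open Finset

variable {ι : Type*} [DecidableEq ι]

/-- there is a subset of `S` of size `min m S.card` on which `|v|` is largest -/
lemma exists_top (v : ι → ℝ) : ∀ (m : ℕ) (S : Finset ι), ∃ M : Finset ι, M ⊆ S ∧
    M.card = min m S.card ∧ ∀ i ∈ S, i ∉ M → ∀ i' ∈ M, |v i| ≤ |v i'| := by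
  intro m
  induction m with
  | zero => exact fun S => ⟨∅, empty_subset _, by simp, by simp⟩
  | succ m ih =>
    intro S
    rcases S.eq_empty_or_nonempty with rfl | hS
    · exact ⟨∅, by simp, by simp, by simp⟩
    · obtain ⟨i₀, hi₀S, hi₀max⟩ := S.exists_max_image (fun i => |v i|) hS
      obtain ⟨M, hMsub, hMcard, hMtop⟩ := ih (S.erase i₀)
      have hi₀M : i₀ ∉ M := fun h => (Finset.notMem_erase i₀ S) (hMsub h)
      refine ⟨insert i₀ M, ?_, ?_, ?_⟩
      · exact Finset.insert_subset hi₀S (hMsub.trans (Finset.erase_subset _ _))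
      · rw [Finset.card_insert_of_notMem hi₀M, hMcard, Finset.card_erase_of_mem hi₀S]
        have : 1 ≤ S.card := Finset.card_pos.mpr hS
        omega
      · intro i hiS hiM i' hi'
        rcases Finset.mem_insert.mp hi' with rfl | hi'M
        · exact hi₀max i hiS
        · have hii₀ : i ≠ i₀ := fun h => hiM (h ▸ Finset.mem_insert_self i₀ M)
          exact hMtop i (Finset.mem_erase.mpr ⟨hii₀, hiS⟩) (fun h => hiM (Finset.mem_insert_of_mem h)) i' hi'M

lemma sum_le_sum_of_card_le (f : ι → ℝ) (X Y : Finset ι) (hcard : X.card ≤ Y.card)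
    (hf : ∀ j ∈ Y, 0 ≤ f j) (hdom : ∀ i ∈ X, ∀ j ∈ Y, f i ≤ f j) :
    ∑ i ∈ X, f i ≤ ∑ j ∈ Y, f j := by
  rcases X.eq_empty_or_nonempty with rfl | hX
  · exact Finset.sum_nonneg hf
  · have hY : Y.Nonempty := Finset.card_pos.mp (lt_of_lt_of_le (Finset.card_pos.mpr hX) hcard)
    obtain ⟨j₀, hj₀, hj₀min⟩ := Y.exists_min_image f hY
    calc ∑ i ∈ X, f i ≤ ∑ _i ∈ X, f j₀ := Finset.sum_le_sum fun i hi => hdom i hi j₀ hj₀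
    _ = (X.card : ℝ) * f j₀ := by rw [Finset.sum_const, nsmul_eq_mul]
    _ ≤ (Y.card : ℝ) * f j₀ :=
        mul_le_mul_of_nonneg_right (Nat.cast_le.mpr hcard) (hf j₀ hj₀)
    _ ≤ ∑ j ∈ Y, f j := by
        have := Finset.card_nsmul_le_sum Y f (f j₀) (fun j hj => hj₀min j hj)
        rwa [nsmul_eq_mul] at this

/-- sum of squares over any small subset is at most that over the top set -/
lemma top_sumsq (v : ι → ℝ) (m : ℕ) (S M W : Finset ι) (hM : M ⊆ S)
    (hMcard : M.card = min m S.card)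
    (htop : ∀ i ∈ S, i ∉ M → ∀ i' ∈ M, |v i| ≤ |v i'|)
    (hW : W ⊆ S) (hWcard : W.card ≤ m) :
    ∑ i ∈ W, (v i) ^ 2 ≤ ∑ i ∈ M, (v i) ^ 2 := by
  have h1 : ∑ i ∈ W, (v i)^2 = ∑ i ∈ W ∩ M, (v i)^2 + ∑ i ∈ W \ M, (v i)^2 :=
    (Finset.sum_inter_add_sum_sdiff W M _).symm
  have h2 : ∑ i ∈ M, (v i)^2 = ∑ i ∈ M ∩ W, (v i)^2 + ∑ i ∈ M \ W, (v i)^2 :=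
    (Finset.sum_inter_add_sum_sdiff M W _).symm
  rw [h1, h2, Finset.inter_comm]
  have key : ∑ i ∈ W \ M, (v i)^2 ≤ ∑ i ∈ M \ W, (v i)^2 := by
    rcases le_or_gt m S.card with hm | hm
    · have hMm : M.card = m := by omega
      apply sum_le_sum_of_card_le _ _ _ ?_ (fun j _ => sq_nonneg _)
      · intro i hi j hj
        have hiS : i ∈ S := hW (Finset.mem_sdiff.mp hi).1
        have hiM : i ∉ M := (Finset.mem_sdiff.mp hi).2
        have habs := htop i hiS hiM j (Finset.mem_sdiff.mp hj).1
        calc (v i)^2 = |v i|^2 := (sq_abs _).symm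
        _ ≤ |v j|^2 := by
            have := abs_nonneg (v i); nlinarith
        _ = (v j)^2 := sq_abs _
      · have e1 : (W \ M).card = W.card - (W ∩ M).card := Finset.card_sdiff_add_card_inter W M ▸ by omega
        have e2 : (M \ W).card = M.card - (M ∩ W).card := Finset.card_sdiff_add_card_inter M W ▸ by omega
        have : (W ∩ M).card = (M ∩ W).card := by rw [Finset.inter_comm]
        omega
    · have hMS : M = S := Finset.eq_of_subset_of_card_le hM (by omega)
      have : W \ M = ∅ := by
        rw [Finset.sdiff_eq_empty_iff_subset, hMS]; exact hW
      rw [this, Finset.sum_empty]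
      exact Finset.sum_nonneg fun j _ => sq_nonneg _
  linarith

end Blocks

section BlocksMain
open Finset

variable {ι : Type*} [DecidableEq ι]

lemma exists_blocks (v : ι → ℝ) (m : ℕ) (hm : 1 ≤ m) (S : Finset ι) :
    ∃ (L : ℕ) (B : ℕ → Finset ι),
      (∀ j, B j ⊆ S) ∧
      (∀ j j', j ≠ j' → Disjoint (B j) (B j')) ∧
      (S = (Finset.range L).biUnion B) ∧
      (∀ j, (B j).card ≤ m) ∧
      ((B 0).card = min m S.card) ∧
      (∀ i ∈ S, i ∉ B 0 → ∀ i' ∈ B 0, |v i| ≤ |v i'|) ∧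
      (∑ j ∈ Finset.Ico 1 L, Real.sqrt (∑ i ∈ B j, (v i)^2)
        ≤ (Real.sqrt m)⁻¹ * ∑ j ∈ Finset.range L, ∑ i ∈ B j, |v i|) := by
  classical
  suffices H : ∀ c : ℕ, ∀ S : Finset ι, S.card ≤ c → ∃ (L : ℕ) (B : ℕ → Finset ι),
      (∀ j, B j ⊆ S) ∧
      (∀ j j', j ≠ j' → Disjoint (B j) (B j')) ∧
      (S = (Finset.range L).biUnion B) ∧
      (∀ j, (B j).card ≤ m) ∧
      ((B 0).card = min m S.card) ∧
      (∀ i ∈ S, i ∉ B 0 → ∀ i' ∈ B 0, |v i| ≤ |v i'|) ∧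
      (∑ j ∈ Finset.Ico 1 L, Real.sqrt (∑ i ∈ B j, (v i)^2)
        ≤ (Real.sqrt m)⁻¹ * ∑ j ∈ Finset.range L, ∑ i ∈ B j, |v i|) by
    exact H S.card S le_rfl
  intro c
  induction c with
  | zero =>
    intro S hS
    have : S = ∅ := Finset.card_eq_zero.mp (Nat.le_zero.mp hS)
    subst this
    exact ⟨0, fun _ => ∅, fun _ => by simp, fun _ _ _ => by simp, by simp, fun _ => by simp,
      by simp, by simp, by simp⟩
  | succ c ih =>
    intro S hS
    rcases le_or_gt S.card c with hle | hgt
    · exact ih S hle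
    have hSne : S.Nonempty := Finset.card_pos.mp (by omega)
    obtain ⟨M, hMsub, hMcard, hMtop⟩ := exists_top v m S
    have hMne : 1 ≤ M.card := by
      have : 1 ≤ S.card := Finset.card_pos.mpr hSne
      omega
    have hS'card : (S \ M).card ≤ c := by
      have := Finset.card_sdiff_of_subset hMsub
      omega
    obtain ⟨L', B', hB'sub, hB'disj, hB'cover, hB'card, _, _, hB'sum⟩ := ih (S \ M) hS'card
    set B : ℕ → Finset ι := fun j => match j with
      | 0 => M
      | j' + 1 => B' j' with hB
    have hB0 : B 0 = M := rfl
    have hBsucc : ∀ j : ℕ, B (j + 1) = B' j := fun _ => rfl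
    have hBsubS : ∀ j, B j ⊆ S := by
      intro j
      match j with
      | 0 => exact hMsub
      | j + 1 => exact (hB'sub j).trans (Finset.sdiff_subset)
    refine ⟨L' + 1, B, hBsubS, ?_, ?_, ?_, ?_, ?_, ?_⟩
    · -- disjoint
      intro j j' hjj'
      match j, j' with
      | 0, 0 => exact absurd rfl hjj'
      | 0, j' + 1 =>
        rw [hB0, hBsucc]
        exact Finset.disjoint_left.mpr fun i hiM hi' =>
          ((Finset.mem_sdiff.mp (hB'sub j' hi')).2) hiM
      | j + 1, 0 =>
        rw [hB0, hBsucc]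
        exact Finset.disjoint_left.mpr fun i hi' hiM =>
          ((Finset.mem_sdiff.mp (hB'sub j hi')).2) hiM
      | j + 1, j' + 1 =>
        rw [hBsucc, hBsucc]
        exact hB'disj j j' (by omega)
    · -- cover
      ext i
      simp only [Finset.mem_biUnion, Finset.mem_range]
      constructor
      · intro hiS
        by_cases hiM : i ∈ M
        · exact ⟨0, by omega, hiM⟩
        · have hiS' : i ∈ S \ M := Finset.mem_sdiff.mpr ⟨hiS, hiM⟩
          rw [hB'cover] at hiS'
          obtain ⟨j, hj, hij⟩ := Finset.mem_biUnion.mp hiS'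
          exact ⟨j + 1, by simp at hj; omega, by rwa [hBsucc]⟩
      · rintro ⟨j, hj, hij⟩
        exact hBsubS j hij
    · -- card ≤ m
      intro j
      match j with
      | 0 => rw [hB0, hMcard]; omega
      | j + 1 => exact hB'card j
    · rw [hB0]; exact hMcard
    · rw [hB0]; exact hMtop
    · -- the key sum inequality
      have hm0 : (0:ℝ) < Real.sqrt m := Real.sqrt_pos.mpr (by exact_mod_cast hm)
      have hreindex2 : ∀ f : ℕ → ℝ, ∑ j ∈ Finset.Ico 1 (L' + 1), f j = ∑ j ∈ Finset.range L', f (j + 1) := by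
        intro f
        rw [Finset.sum_Ico_eq_sum_range]
        simp [add_comm]
      have hhead : ∀ f : ℕ → ℝ, ∑ j ∈ Finset.range (L' + 1), f j
          = f 0 + ∑ j ∈ Finset.range L', f (j + 1) := by
        intro f; rw [Finset.sum_range_succ']
        ring
      rw [hreindex2, hhead]
      simp only [hBsucc, hB0]
      -- bound on the first new tail block B' 0
      have hfirst : Real.sqrt (∑ i ∈ B' 0, (v i)^2) ≤ (Real.sqrt m)⁻¹ * ∑ i ∈ M, |v i| := by
        rcases (B' 0).eq_empty_or_nonempty with h0 | h0
        · rw [h0]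
          simp only [Finset.sum_empty, Real.sqrt_zero]
          exact mul_nonneg (by positivity) (Finset.sum_nonneg fun i _ => abs_nonneg _)
        · -- then S \ M nonempty, so M.card = m
          have hS'ne : (S \ M).Nonempty := h0.mono (hB'sub 0)
          have hMm : M.card = m := by
            have h1 := Finset.card_pos.mpr hS'ne
            have h2 := Finset.card_sdiff_of_subset hMsub
            omega
          set t : ℝ := ∑ i ∈ M, |v i| with ht
          have ht0 : 0 ≤ t := Finset.sum_nonneg fun i _ => abs_nonneg _
          have hsmall : ∀ i ∈ B' 0, |v i| ≤ t / m := by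
            intro i hi
            have hiS' := hB'sub 0 hi
            have hiS : i ∈ S := (Finset.mem_sdiff.mp hiS').1
            have hiM : i ∉ M := (Finset.mem_sdiff.mp hiS').2
            have : (M.card : ℝ) * |v i| ≤ t := by
              have h5 := Finset.card_nsmul_le_sum M (fun i' => |v i'|) (|v i|)
                (fun i' hi' => hMtop i hiS hiM i' hi')
              rwa [nsmul_eq_mul] at h5
            rw [hMm] at this
            rw [le_div_iff₀ (by exact_mod_cast hm : (0:ℝ) < m)]
            linarith [this]
          have hsumsq : ∑ i ∈ B' 0, (v i)^2 ≤ t^2 / m := by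
            have h1 : ∑ i ∈ B' 0, (v i)^2 ≤ ∑ i ∈ B' 0, |v i| * (t / m) := by
              refine Finset.sum_le_sum fun i hi => ?_
              have := hsmall i hi
              have h2 := abs_nonneg (v i)
              nlinarith [sq_abs (v i)]
            have h3 : ∑ i ∈ B' 0, |v i| * (t / m) = (∑ i ∈ B' 0, |v i|) * (t / m) := by
              rw [Finset.sum_mul]
            have h4 : ∑ i ∈ B' 0, |v i| ≤ t := by
              calc ∑ i ∈ B' 0, |v i| ≤ ∑ _i ∈ B' 0, (t / m) :=
                Finset.sum_le_sum hsmall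
              _ = (B' 0).card * (t / m) := by rw [Finset.sum_const, nsmul_eq_mul]
              _ ≤ m * (t / m) := by
                  apply mul_le_mul_of_nonneg_right _ (by positivity)
                  exact_mod_cast hB'card 0
              _ = t := by field_simp
            have hm' : (0:ℝ) < m := by exact_mod_cast hm
            rw [h3] at h1
            calc ∑ i ∈ B' 0, (v i)^2 ≤ (∑ i ∈ B' 0, |v i|) * (t / m) := h1
            _ ≤ t * (t / m) := mul_le_mul_of_nonneg_right h4 (by positivity)
            _ = t^2 / m := by ring
          calc Real.sqrt (∑ i ∈ B' 0, (v i)^2) ≤ Real.sqrt (t^2 / m) := Real.sqrt_le_sqrt hsumsq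
          _ = t / Real.sqrt m := by
              rw [Real.sqrt_div (sq_nonneg t), Real.sqrt_sq ht0]
          _ = (Real.sqrt m)⁻¹ * t := by ring
      rcases Nat.eq_zero_or_pos L' with rfl | hL'
      · simp only [Finset.range_zero, Finset.sum_empty, add_zero]
        exact mul_nonneg (by positivity) (Finset.sum_nonneg fun i _ => abs_nonneg _)
      · have hsplit : ∑ j ∈ Finset.range L', Real.sqrt (∑ i ∈ B' j, (v i)^2)
            = Real.sqrt (∑ i ∈ B' 0, (v i)^2) + ∑ j ∈ Finset.Ico 1 L', Real.sqrt (∑ i ∈ B' j, (v i)^2) := by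
          rw [Finset.range_eq_Ico, Finset.sum_eq_sum_Ico_succ_bot hL']
        rw [hsplit, mul_add]
        have h1 : (Real.sqrt m)⁻¹ * ∑ j ∈ Finset.range L', ∑ i ∈ B' j, |v i|
            ≥ ∑ j ∈ Finset.Ico 1 L', Real.sqrt (∑ i ∈ B' j, (v i)^2) := hB'sum
        linarith [hfirst]

section Helpers2
open Finset

variable {ι : Type*} [Fintype ι] [DecidableEq ι]

lemma sum_sq_restrict (v : ι → ℝ) (S : Finset ι) :
    ∑ i, (restrict v S i)^2 = ∑ i ∈ S, (v i)^2 := by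
  rw [show ∑ i, (restrict v S i)^2 = ∑ i, if i ∈ S then (v i)^2 else 0 by
    apply Finset.sum_congr rfl; intro i _; by_cases hi : i ∈ S <;> simp [_root_.restrict, hi]]
  rw [Finset.sum_ite_mem, Finset.univ_inter]

lemma l1norm_restrict (v : ι → ℝ) (S : Finset ι) :
    l1norm (restrict v S) = ∑ i ∈ S, |v i| := by
  rw [l1norm, show ∑ i, |restrict v S i| = ∑ i, if i ∈ S then |v i| else 0 by
    apply Finset.sum_congr rfl; intro i _; by_cases hi : i ∈ S <;> simp [_root_.restrict, hi]]
  rw [Finset.sum_ite_mem, Finset.univ_inter]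

lemma l2norm_restrict (v : ι → ℝ) (S : Finset ι) :
    l2norm (restrict v S) = Real.sqrt (∑ i ∈ S, (v i)^2) := by
  rw [l2norm, sum_sq_restrict]

lemma isSparse_restrict (v : ι → ℝ) (S : Finset ι) (m : ℕ) (h : S.card ≤ m) :
    IsSparse m (restrict v S) := by
  refine le_trans (Finset.card_le_card ?_) h
  intro i hi
  simp only [Finset.mem_filter] at hi
  by_contra hiS
  exact hi.2 (by simp [_root_.restrict, hiS])

lemma l1_le_sqrt_card_mul (v : ι → ℝ) (S : Finset ι) :
    ∑ i ∈ S, |v i| ≤ Real.sqrt S.card * Real.sqrt (∑ i ∈ S, (v i)^2) := by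
  have cs := Finset.sum_mul_sq_le_sq_mul_sq S (fun _ => (1:ℝ)) (fun i => |v i|)
  simp only [one_mul, one_pow, Finset.sum_const, nsmul_eq_mul, mul_one, sq_abs] at cs
  have h0 : 0 ≤ ∑ i ∈ S, |v i| := Finset.sum_nonneg fun i _ => abs_nonneg _
  calc ∑ i ∈ S, |v i| = Real.sqrt ((∑ i ∈ S, |v i|)^2) := (Real.sqrt_sq h0).symm
  _ ≤ Real.sqrt ((S.card : ℝ) * ∑ i ∈ S, (v i)^2) := Real.sqrt_le_sqrt cs
  _ = Real.sqrt S.card * Real.sqrt (∑ i ∈ S, (v i)^2) := Real.sqrt_mul (by positivity) _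

end Helpers2

section RIP2
open Finset

variable {n N : ℕ} (A : Matrix (Fin n) (Fin N) ℝ)

lemma ripConst_l2_upper (m : ℕ) (u : Fin N → ℝ) (hu : IsSparse m u) :
    l2norm (A.mulVec u) ≤ Real.sqrt (1 + ripConst A m) * l2norm u := by
  have h2 := (ripConst_spec A m u hu).2
  have h1 : (0:ℝ) ≤ 1 + ripConst A m := by linarith [ripConst_nonneg A m]
  rw [l2norm, l2norm, ← Real.sqrt_mul h1]
  exact Real.sqrt_le_sqrt h2

lemma ripConst_l2_lower (m : ℕ) (u : Fin N → ℝ) (hu : IsSparse m u)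
    (h1 : 0 ≤ 1 - ripConst A m) :
    Real.sqrt (1 - ripConst A m) * l2norm u ≤ l2norm (A.mulVec u) := by
  have h2 := (ripConst_spec A m u hu).1
  rw [l2norm, l2norm, ← Real.sqrt_mul h1]
  exact Real.sqrt_le_sqrt h2

lemma mulVec_finset_sum {κ : Type*} (s : Finset κ) (f : κ → (Fin N → ℝ)) :
    A.mulVec (∑ j ∈ s, f j) = ∑ j ∈ s, A.mulVec (f j) := by
  simp only [← Matrix.mulVecLin_apply]
  exact map_sum A.mulVecLin f s

end RIP2

lemma final_algebra (ε ξ γ sa sk s1 D : ℝ) (hsa : sa ≠ 0) (hsk : sk ≠ 0) (hD : D ≠ 0) :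
    (1 + γ / sa) * ((2 * ε + 2 * s1 * (sa * sk)⁻¹ * ξ) / D) + 2 * (sa * sk)⁻¹ * ξ
    = 2 * (1 + γ / sa) / D * ε + 2 * sa⁻¹ * ((D + γ / sa * s1) + s1) / D * sk⁻¹ * ξ := by
  field_simp
  ring

set_option maxHeartbeats 2000000 in
/-- Theorem 3.2 of the paper: stable and robust recovery of an arbitrary
signal from noisy measurements via weighted ℓ1 minimization with partial support information. -/
theorem weighted_l1_recovery
    {n N : ℕ} (A : Matrix (Fin n) (Fin N) ℝ)
    (x : Fin N → ℝ) (e : Fin n → ℝ) (y : Fin n → ℝ)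
    (k ak : ℕ) (a ρ α ω ε γ : ℝ)
    (T0 Tt : Finset (Fin N)) (xk : Fin N → ℝ) (w : Fin N → ℝ)
    (hk : 1 ≤ k)
    -- `xk` is the best `k`-term approximation of `x`, supported on `T0` with `|T0| = k`
    (hT0card : T0.card = k)
    (hxk : xk = restrict x T0)
    (hbest : ∀ i ∈ T0, ∀ j ∉ T0, |x j| ≤ |x i|)
    -- the support estimate `Tt` has `|Tt| = ρk` and `|Tt ∩ T0| = αρk`
    (hTtcard : (Tt.card : ℝ) = ρ * k)
    (hTtT0card : ((Tt ∩ T0).card : ℝ) = α * ρ * k)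
    -- `a` is a real number with `ak` an integer, `a ≥ (1-α)ρ`, `a > 1`
    (hak : (ak : ℝ) = a * k)
    (ha : 1 < a)
    (haαρ : (1 - α) * ρ ≤ a)
    -- the weight `ω ∈ [0,1]` and `γ = ω + (1-ω)√(1+ρ-2αρ)`
    (hω0 : 0 ≤ ω) (hω1 : ω ≤ 1)
    (hγ : γ = ω + (1 - ω) * Real.sqrt (1 + ρ - 2 * α * ρ))
    -- RIP condition: `δ_{ak} + (a/γ²) δ_{(a+1)k} < a/γ² - 1`
    (hRIP : ripConst A ak + (a / γ ^ 2) * ripConst A (ak + k) < a / γ ^ 2 - 1)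
    -- measurements `y = Ax + e` with `‖e‖₂ ≤ ε`
    (hy : y = A.mulVec x + e)
    (he : l2norm e ≤ ε)
    -- the weights: `ω` on `Tt`, `1` on `Ttᶜ`
    (hw : ∀ i, w i = if i ∈ Tt then ω else 1)
    -- `xs` is any solution of the weighted ℓ1 problem
    (xs : Fin N → ℝ)
    (hfeas : l2norm (A.mulVec xs - y) ≤ ε)
    (hopt : wl1norm w xs ≤ wl1norm w x) :
    l2norm (xs - x) ≤
      (2 * (1 + γ / Real.sqrt a) /
          (Real.sqrt (1 - ripConst A (ak + k)) -
            (γ / Real.sqrt a) * Real.sqrt (1 + ripConst A ak))) * ε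
      + (2 * (Real.sqrt a)⁻¹ * (Real.sqrt (1 - ripConst A (ak + k)) +
            Real.sqrt (1 + ripConst A ak)) /
          (Real.sqrt (1 - ripConst A (ak + k)) -
            (γ / Real.sqrt a) * Real.sqrt (1 + ripConst A ak)))
        * (k : ℝ) ^ (-(1 / 2 : ℝ))
        * (ω * l1norm (x - xk) + (1 - ω) * l1norm (restrict x (Ttᶜ ∩ T0ᶜ))) := by
  classical
  set δ₁ := ripConst A ak with hδ₁def
  set δ₂ := ripConst A (ak + k) with hδ₂def
  set h := xs - x with hh
  set s1 := Real.sqrt (1 + δ₁) with hs1def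
  set s2 := Real.sqrt (1 - δ₂) with hs2def
  set D := s2 - γ / Real.sqrt a * s1 with hDdef
  set ξ := ω * l1norm (x - xk) + (1 - ω) * l1norm (_root_.restrict x (Ttᶜ ∩ T0ᶜ)) with hξdef
  have hδ₁0 : 0 ≤ δ₁ := ripConst_nonneg A ak
  have hδ₂0 : 0 ≤ δ₂ := ripConst_nonneg A (ak + k)
  have hk0 : (0:ℝ) < k := by exact_mod_cast hk
  have ha0 : (0:ℝ) < a := by linarith
  have hsa : 0 < Real.sqrt a := Real.sqrt_pos.mpr ha0
  have hsk : 0 < Real.sqrt (k:ℝ) := Real.sqrt_pos.mpr hk0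
  have hγ0 : 0 ≤ γ := by
    rw [hγ]; have := Real.sqrt_nonneg (1 + ρ - 2 * α * ρ); nlinarith
  have hγpos : 0 < γ := by
    rcases eq_or_lt_of_le hγ0 with h0 | h0
    · exfalso
      rw [← h0] at hRIP
      norm_num at hRIP
      linarith
    · exact h0
  have hγsq : 0 < γ ^ 2 := by positivity
  have hkey : (1 + δ₁) * γ ^ 2 < a * (1 - δ₂) := by
    have hexp : a / γ ^ 2 * (1 - δ₂) = a / γ ^ 2 - a / γ ^ 2 * δ₂ := by ring
    have h1 : 1 + δ₁ < a / γ ^ 2 * (1 - δ₂) := by linarith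
    have h2 := mul_lt_mul_of_pos_right h1 hγsq
    have h3 : a / γ ^ 2 * (1 - δ₂) * γ ^ 2 = a * (1 - δ₂) := by field_simp
    linarith
  have hδ₂1 : 0 < 1 - δ₂ := by nlinarith
  have hs1pos : 0 < s1 := Real.sqrt_pos.mpr (by linarith)
  have hs2pos : 0 < s2 := Real.sqrt_pos.mpr hδ₂1
  have hD : 0 < D := by
    have hlt := Real.sqrt_lt_sqrt (by positivity : (0:ℝ) ≤ (1 + δ₁) * γ ^ 2) hkey
    have e1 : Real.sqrt ((1 + δ₁) * γ ^ 2) = γ * s1 := by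
      rw [Real.sqrt_mul (by linarith : (0:ℝ) ≤ 1 + δ₁), Real.sqrt_sq hγ0, hs1def]; ring
    have e2 : Real.sqrt (a * (1 - δ₂)) = Real.sqrt a * s2 := by
      rw [Real.sqrt_mul ha0.le, hs2def]
    rw [e1, e2] at hlt
    have : γ / Real.sqrt a * s1 < s2 := by
      rw [div_mul_eq_mul_div, div_lt_iff₀ hsa]
      nlinarith
    rw [hDdef]; linarith
  have hξ0 : 0 ≤ ξ := by
    rw [hξdef]
    have h1 : 0 ≤ l1norm (x - xk) := Finset.sum_nonneg fun i _ => abs_nonneg _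
    have h2 : 0 ≤ l1norm (_root_.restrict x (Ttᶜ ∩ T0ᶜ)) := Finset.sum_nonneg fun i _ => abs_nonneg _
    nlinarith
  -- blocks
  have hk1 : (1:ℝ) ≤ (k:ℝ) := by exact_mod_cast hk
  have hak1 : 1 ≤ ak := by
    have h1 : (1:ℝ) ≤ (ak:ℝ) := by rw [hak]; nlinarith
    exact_mod_cast h1
  obtain ⟨L, B, hBsub, hBdisj, hBcover, hBcard, hB0card, hB0top, hBsum⟩ :=
    exists_blocks h ak hak1 T0ᶜ
  set E := Real.sqrt (∑ i ∈ T0 ∪ B 0, (h i)^2) with hEdef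
  have hE0 : 0 ≤ E := Real.sqrt_nonneg _
  have hE2 : E ^ 2 = ∑ i ∈ T0 ∪ B 0, (h i)^2 :=
    Real.sq_sqrt (Finset.sum_nonneg fun i _ => sq_nonneg _)
  set St := ∑ j ∈ Finset.Ico 1 L, Real.sqrt (∑ i ∈ B j, (h i)^2) with hStdef
  have hSt0 : 0 ≤ St := Finset.sum_nonneg fun j _ => Real.sqrt_nonneg _
  -- decomposition
  have hdecomp : h = _root_.restrict h (T0 ∪ B 0) + ∑ j ∈ Finset.Ico 1 L, _root_.restrict h (B j) := by
    funext i
    simp only [Pi.add_apply, Finset.sum_apply]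
    by_cases hi : i ∈ T0 ∪ B 0
    · have hz : ∑ j ∈ Finset.Ico 1 L, _root_.restrict h (B j) i = 0 := by
        apply Finset.sum_eq_zero
        intro j hj
        have hj1 : 1 ≤ j := (Finset.mem_Ico.mp hj).1
        have hiBj : i ∉ B j := by
          intro hmem
          rcases Finset.mem_union.mp hi with hiT0 | hiB0
          · exact (Finset.mem_compl.mp (hBsub j hmem)) hiT0
          · exact (Finset.disjoint_left.mp (hBdisj 0 j (by omega)) hiB0) hmem
        simp [_root_.restrict, hiBj]
      rw [hz, add_zero, _root_.restrict, if_pos hi]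
    · have hiT0c : i ∈ T0ᶜ := Finset.mem_compl.mpr fun hmem => hi (Finset.mem_union_left _ hmem)
      have hiB0 : i ∉ B 0 := fun hmem => hi (Finset.mem_union_right _ hmem)
      rw [hBcover] at hiT0c
      obtain ⟨j0, hj0L, hij0⟩ := Finset.mem_biUnion.mp hiT0c
      have hj0range : j0 < L := Finset.mem_range.mp hj0L
      have hj0pos : j0 ≠ 0 := fun heq => hiB0 (heq ▸ hij0)
      have hsum : ∑ j ∈ Finset.Ico 1 L, _root_.restrict h (B j) i = h i := by
        rw [Finset.sum_eq_single_of_mem j0 (Finset.mem_Ico.mpr ⟨by omega, hj0range⟩)]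
        · simp [_root_.restrict, hij0]
        · intro j hj hne
          have hiBj : i ∉ B j := fun hmem =>
            (Finset.disjoint_left.mp (hBdisj j0 j (Ne.symm hne)) hij0) hmem
          simp [_root_.restrict, hiBj]
      rw [hsum, _root_.restrict, if_neg hi, zero_add]
  -- weights nonneg and splitting
  have hwnonneg : ∀ i, 0 ≤ w i := by
    intro i; rw [hw i]; split
    · exact hω0
    · norm_num
  have wsplit : ∀ (S : Finset (Fin N)) (g : Fin N → ℝ),
      ∑ i ∈ S, w i * g i = ω * ∑ i ∈ S ∩ Tt, g i + ∑ i ∈ S \ Tt, g i := by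
    intro S g
    rw [← Finset.sum_inter_add_sum_sdiff S Tt (fun i => w i * g i)]
    congr 1
    · rw [Finset.mul_sum]
      apply Finset.sum_congr rfl
      intro i hi
      rw [hw i, if_pos (Finset.mem_inter.mp hi).2]
    · apply Finset.sum_congr rfl
      intro i hi
      rw [hw i, if_neg (Finset.mem_sdiff.mp hi).2, one_mul]
  -- the optimality-derived inequality
  have star : ∑ i ∈ T0ᶜ, w i * |h i| ≤ ∑ i ∈ T0, w i * |h i| + 2 * ∑ i ∈ T0ᶜ, w i * |x i| := by
    have hAineq : ∑ i ∈ T0ᶜ, (w i * |h i| - w i * |x i|) ≤ ∑ i ∈ T0ᶜ, w i * |xs i| := by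
      apply Finset.sum_le_sum
      intro i _
      have h1 : |h i| - |x i| ≤ |xs i| := by
        have e1 : h i = xs i - x i := rfl
        have := abs_sub (xs i) (x i)
        rw [← e1] at this
        linarith [this]
      have h2 := mul_le_mul_of_nonneg_left h1 (hwnonneg i)
      nlinarith
    have hBineq : ∑ i ∈ T0, (w i * |x i| - w i * |h i|) ≤ ∑ i ∈ T0, w i * |xs i| := by
      apply Finset.sum_le_sum
      intro i _
      have h1 : |x i| - |h i| ≤ |xs i| := by
        have e1 : x i = xs i - h i := by simp [hh]
        have := abs_sub (xs i) (h i)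
        rw [← e1] at this
        linarith [this]
      have h2 := mul_le_mul_of_nonneg_left h1 (hwnonneg i)
      nlinarith
    rw [Finset.sum_sub_distrib] at hAineq hBineq
    have hsp1 : ∑ i ∈ T0, w i * |xs i| + ∑ i ∈ T0ᶜ, w i * |xs i| = wl1norm w xs :=
      Finset.sum_add_sum_compl T0 _
    have hsp2 : ∑ i ∈ T0, w i * |x i| + ∑ i ∈ T0ᶜ, w i * |x i| = wl1norm w x :=
      Finset.sum_add_sum_compl T0 _
    linarith
  -- identify ξ
  have hwx : ∑ i ∈ T0ᶜ, w i * |x i| = ξ := by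
    rw [wsplit T0ᶜ (fun i => |x i|), hξdef]
    have e1 : l1norm (x - xk) = ∑ i ∈ T0ᶜ, |x i| := by
      rw [hxk]
      have e0 : x - _root_.restrict x T0 = _root_.restrict x T0ᶜ := by
        funext i
        by_cases hi : i ∈ T0 <;> simp [_root_.restrict, hi]
      rw [e0, l1norm_restrict]
    have e2 : l1norm (_root_.restrict x (Ttᶜ ∩ T0ᶜ)) = ∑ i ∈ T0ᶜ \ Tt, |x i| := by
      rw [l1norm_restrict]
      apply Finset.sum_congr _ (fun i _ => rfl)
      ext i
      simp [Finset.mem_inter, Finset.mem_compl, Finset.mem_sdiff, and_comm]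
    rw [e1, e2]
    have e3 : ∑ i ∈ T0ᶜ, |x i| = ∑ i ∈ T0ᶜ ∩ Tt, |x i| + ∑ i ∈ T0ᶜ \ Tt, |x i| :=
      (Finset.sum_inter_add_sum_sdiff _ _ _).symm
    rw [e3]; ring
  -- cone inequality
  have cone : ∑ i ∈ T0ᶜ, |h i| ≤ γ * Real.sqrt (k:ℝ) * E + 2 * ξ := by
    rw [wsplit T0ᶜ (fun i => |h i|), wsplit T0 (fun i => |h i|), hwx] at star
    have split0 : ∑ i ∈ T0ᶜ, |h i| = ∑ i ∈ T0ᶜ ∩ Tt, |h i| + ∑ i ∈ T0ᶜ \ Tt, |h i| :=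
      (Finset.sum_inter_add_sum_sdiff _ _ _).symm
    have splitT0 : ∑ i ∈ T0, |h i| = ∑ i ∈ T0 ∩ Tt, |h i| + ∑ i ∈ T0 \ Tt, |h i| :=
      (Finset.sum_inter_add_sum_sdiff _ _ _).symm
    have hdisjΔ : Disjoint (T0ᶜ ∩ Tt) (T0 \ Tt) := by
      apply Finset.disjoint_left.mpr
      intro i hi1 hi2
      exact (Finset.mem_compl.mp (Finset.mem_inter.mp hi1).1) (Finset.mem_sdiff.mp hi2).1
    set TΔ := (T0ᶜ ∩ Tt) ∪ (T0 \ Tt) with hTΔdef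
    have hTΔsum : ∑ i ∈ TΔ, |h i| = ∑ i ∈ T0ᶜ ∩ Tt, |h i| + ∑ i ∈ T0 \ Tt, |h i| :=
      Finset.sum_union hdisjΔ
    have hTΔsq : ∑ i ∈ TΔ, (h i)^2 = ∑ i ∈ T0ᶜ ∩ Tt, (h i)^2 + ∑ i ∈ T0 \ Tt, (h i)^2 :=
      Finset.sum_union hdisjΔ
    -- cardinalities
    have cTtT0 : ((Tt ∩ T0).card : ℝ) = α * ρ * k := hTtT0card
    have cT0cTt : ((T0ᶜ ∩ Tt).card : ℝ) = ρ * k - α * ρ * k := by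
      have e0 : T0ᶜ ∩ Tt = Tt \ T0 := by
        ext i; simp [Finset.mem_inter, Finset.mem_compl, Finset.mem_sdiff, and_comm]
      rw [e0]
      have h4 := Finset.card_sdiff_add_card_inter Tt T0
      have h5 : ((Tt \ T0).card : ℝ) + ((Tt ∩ T0).card : ℝ) = (Tt.card : ℝ) := by
        exact_mod_cast congrArg (Nat.cast : ℕ → ℝ) h4
      linarith
    have cT0dTt : ((T0 \ Tt).card : ℝ) = k - α * ρ * k := by
      have h4 := Finset.card_sdiff_add_card_inter T0 Tt
      have h5 : ((T0 \ Tt).card : ℝ) + ((T0 ∩ Tt).card : ℝ) = (T0.card : ℝ) := by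
        exact_mod_cast congrArg (Nat.cast : ℕ → ℝ) h4
      have h6 : ((T0 ∩ Tt).card : ℝ) = α * ρ * k := by rw [Finset.inter_comm]; exact hTtT0card
      rw [hT0card] at h5
      linarith
    have cTΔ : ((TΔ).card : ℝ) = k * (1 + ρ - 2 * α * ρ) := by
      rw [hTΔdef, Finset.card_union_of_disjoint hdisjΔ]
      push_cast
      rw [cT0cTt, cT0dTt]
      ring
    have hrnn : 0 ≤ 1 + ρ - 2 * α * ρ := by
      have hnn : (0:ℝ) ≤ ((TΔ).card : ℝ) := Nat.cast_nonneg _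
      rw [cTΔ] at hnn
      exact (mul_nonneg_iff_of_pos_left hk0).mp hnn
    have hdisjT0B0 : Disjoint T0 (B 0) := by
      apply Finset.disjoint_left.mpr
      intro i hi1 hi2
      exact (Finset.mem_compl.mp (hBsub 0 hi2)) hi1
    have hsqT0B0 : ∑ i ∈ T0 ∪ B 0, (h i)^2 = ∑ i ∈ T0, (h i)^2 + ∑ i ∈ B 0, (h i)^2 :=
      Finset.sum_union hdisjT0B0
    have hB0nn : (0:ℝ) ≤ ∑ i ∈ B 0, (h i)^2 := Finset.sum_nonneg fun i _ => sq_nonneg _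
    have hsqT0le : ∑ i ∈ T0, (h i)^2 ≤ E^2 := by
      rw [hE2, hsqT0B0]; linarith
    have hsqW : ∑ i ∈ T0ᶜ ∩ Tt, (h i)^2 ≤ ∑ i ∈ B 0, (h i)^2 := by
      apply top_sumsq h ak T0ᶜ (B 0) (T0ᶜ ∩ Tt) (hBsub 0) hB0card hB0top Finset.inter_subset_left
      have hr : ((T0ᶜ ∩ Tt).card : ℝ) ≤ ((ak:ℕ):ℝ) := by
        have h10 := mul_le_mul_of_nonneg_right haαρ hk0.le
        rw [cT0cTt, hak]; linarith [h10]
      exact_mod_cast hr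
    have hsqT0d : ∑ i ∈ T0 \ Tt, (h i)^2 ≤ ∑ i ∈ T0, (h i)^2 :=
      Finset.sum_le_sum_of_subset_of_nonneg Finset.sdiff_subset (fun i _ _ => sq_nonneg _)
    have hTΔsqle : ∑ i ∈ TΔ, (h i)^2 ≤ E^2 := by
      rw [hTΔsq, hE2, hsqT0B0]; linarith
    have cs1 : ∑ i ∈ T0, |h i| ≤ Real.sqrt (k:ℝ) * E := by
      have hcs := l1_le_sqrt_card_mul h T0
      rw [hT0card] at hcs
      have h7 : Real.sqrt (∑ i ∈ T0, (h i)^2) ≤ E := by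
        calc Real.sqrt (∑ i ∈ T0, (h i)^2) ≤ Real.sqrt (E^2) := Real.sqrt_le_sqrt hsqT0le
        _ = E := Real.sqrt_sq hE0
      calc ∑ i ∈ T0, |h i| ≤ Real.sqrt (k:ℝ) * Real.sqrt (∑ i ∈ T0, (h i)^2) := hcs
      _ ≤ Real.sqrt (k:ℝ) * E := mul_le_mul_of_nonneg_left h7 (Real.sqrt_nonneg _)
    have cs2 : ∑ i ∈ TΔ, |h i| ≤ Real.sqrt (k:ℝ) * Real.sqrt (1 + ρ - 2*α*ρ) * E := by
      have hcs := l1_le_sqrt_card_mul h TΔ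
      have hc : Real.sqrt ((TΔ.card : ℝ)) = Real.sqrt (k:ℝ) * Real.sqrt (1 + ρ - 2*α*ρ) := by
        rw [cTΔ, Real.sqrt_mul hk0.le]
      rw [hc] at hcs
      have h7 : Real.sqrt (∑ i ∈ TΔ, (h i)^2) ≤ E := by
        calc Real.sqrt (∑ i ∈ TΔ, (h i)^2) ≤ Real.sqrt (E^2) := Real.sqrt_le_sqrt hTΔsqle
        _ = E := Real.sqrt_sq hE0
      calc ∑ i ∈ TΔ, |h i| ≤ Real.sqrt (k:ℝ) * Real.sqrt (1 + ρ - 2*α*ρ) * Real.sqrt (∑ i ∈ TΔ, (h i)^2) := hcs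
      _ ≤ Real.sqrt (k:ℝ) * Real.sqrt (1 + ρ - 2*α*ρ) * E :=
          mul_le_mul_of_nonneg_left h7 (by positivity)
    have m1 : ω * ∑ i ∈ T0, |h i| ≤ ω * (Real.sqrt (k:ℝ) * E) := mul_le_mul_of_nonneg_left cs1 hω0
    have m2 : (1-ω) * ∑ i ∈ TΔ, |h i| ≤ (1-ω) * (Real.sqrt (k:ℝ) * Real.sqrt (1 + ρ - 2*α*ρ) * E) :=
      mul_le_mul_of_nonneg_left cs2 (by linarith)
    have eA : ω * ∑ i ∈ T0, |h i| = ω * ∑ i ∈ T0 ∩ Tt, |h i| + ω * ∑ i ∈ T0 \ Tt, |h i| := by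
      rw [splitT0]; ring
    have eB : (1-ω) * ∑ i ∈ TΔ, |h i|
        = (1-ω) * ∑ i ∈ T0ᶜ ∩ Tt, |h i| + (1-ω) * ∑ i ∈ T0 \ Tt, |h i| := by
      rw [hTΔsum]; ring
    have hγexp : γ * Real.sqrt (k:ℝ) * E
        = ω * (Real.sqrt (k:ℝ) * E) + (1-ω) * (Real.sqrt (k:ℝ) * Real.sqrt (1 + ρ - 2*α*ρ) * E) := by
      rw [hγ]; ring
    rw [split0, hγexp]
    linarith [star, m1, m2, eA, eB]
  -- tail bounds
  have hsum_all : ∑ j ∈ Finset.range L, ∑ i ∈ B j, |h i| = ∑ i ∈ T0ᶜ, |h i| := by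
    have hd := Finset.sum_biUnion (s := Finset.range L) (t := B) (f := fun i => |h i|)
      (fun j _ j' _ hne => hBdisj j j' hne)
    rw [← hBcover] at hd
    exact hd.symm
  have h7 : Real.sqrt ((ak:ℕ):ℝ) = Real.sqrt a * Real.sqrt (k:ℝ) := by
    rw [hak, Real.sqrt_mul ha0.le]
  have htail : St ≤ (Real.sqrt a * Real.sqrt (k:ℝ))⁻¹ * ∑ i ∈ T0ᶜ, |h i| := by
    calc St ≤ (Real.sqrt ((ak:ℕ):ℝ))⁻¹ * ∑ j ∈ Finset.range L, ∑ i ∈ B j, |h i| := hBsum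
    _ = (Real.sqrt a * Real.sqrt (k:ℝ))⁻¹ * ∑ i ∈ T0ᶜ, |h i| := by rw [hsum_all, h7]
  have htail2 : St ≤ γ / Real.sqrt a * E + 2 * (Real.sqrt a * Real.sqrt (k:ℝ))⁻¹ * ξ := by
    have hinv : (0:ℝ) ≤ (Real.sqrt a * Real.sqrt (k:ℝ))⁻¹ := by positivity
    have step := mul_le_mul_of_nonneg_left cone hinv
    have heq : (Real.sqrt a * Real.sqrt (k:ℝ))⁻¹ * (γ * Real.sqrt (k:ℝ) * E + 2 * ξ)
        = γ / Real.sqrt a * E + 2 * (Real.sqrt a * Real.sqrt (k:ℝ))⁻¹ * ξ := by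
      field_simp
    calc St ≤ (Real.sqrt a * Real.sqrt (k:ℝ))⁻¹ * ∑ i ∈ T0ᶜ, |h i| := htail
    _ ≤ (Real.sqrt a * Real.sqrt (k:ℝ))⁻¹ * (γ * Real.sqrt (k:ℝ) * E + 2 * ξ) := step
    _ = _ := heq
  -- measurement error bound
  have hAh2ε : l2norm (A.mulVec h) ≤ 2 * ε := by
    have hAe : A.mulVec h = (A.mulVec xs - y) + e := by
      have h9 : A.mulVec h = A.mulVec xs - A.mulVec x := by
        rw [hh]; simp only [← Matrix.mulVecLin_apply]; exact map_sub _ _ _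
      rw [h9, hy]
      funext i
      simp only [Pi.add_apply, Pi.sub_apply]
      ring
    rw [hAe]
    calc l2norm _ ≤ l2norm (A.mulVec xs - y) + l2norm e := l2norm_add_le _ _
    _ ≤ 2 * ε := by linarith
  -- RIP estimates
  have hcard01 : (T0 ∪ B 0).card ≤ ak + k := by
    have h8 := Finset.card_union_le T0 (B 0)
    have h9 := hBcard 0
    omega
  have hEl2 : l2norm (_root_.restrict h (T0 ∪ B 0)) = E := l2norm_restrict h (T0 ∪ B 0)
  have hlow : s2 * E ≤ l2norm (A.mulVec (_root_.restrict h (T0 ∪ B 0))) := by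
    have hl := ripConst_l2_lower A (ak + k) _
      (isSparse_restrict h (T0 ∪ B 0) (ak + k) hcard01)
      (by rw [← hδ₂def]; linarith)
    rw [hEl2, ← hδ₂def, ← hs2def] at hl
    exact hl
  have hAt : l2norm (A.mulVec (∑ j ∈ Finset.Ico 1 L, _root_.restrict h (B j))) ≤ s1 * St := by
    rw [mulVec_finset_sum]
    refine le_trans (l2norm_sum_le _ _) ?_
    rw [hStdef, Finset.mul_sum]
    apply Finset.sum_le_sum
    intro j hj
    have hs := ripConst_l2_upper A ak (_root_.restrict h (B j))
      (isSparse_restrict h (B j) ak (hBcard j))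
    rw [l2norm_restrict, ← hδ₁def, ← hs1def] at hs
    exact hs
  have hAsplit : A.mulVec (_root_.restrict h (T0 ∪ B 0))
      = A.mulVec h - A.mulVec (∑ j ∈ Finset.Ico 1 L, _root_.restrict h (B j)) := by
    have h9 : A.mulVec h = A.mulVec (_root_.restrict h (T0 ∪ B 0))
        + A.mulVec (∑ j ∈ Finset.Ico 1 L, _root_.restrict h (B j)) := by
      conv_lhs => rw [hdecomp]
      simp only [← Matrix.mulVecLin_apply]
      exact map_add _ _ _
    rw [h9]
    abel
  have hAh0 : l2norm (A.mulVec (_root_.restrict h (T0 ∪ B 0))) ≤ 2 * ε + s1 * St := by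
    rw [hAsplit, sub_eq_add_neg]
    calc l2norm _ ≤ l2norm (A.mulVec h)
        + l2norm (-(A.mulVec (∑ j ∈ Finset.Ico 1 L, _root_.restrict h (B j)))) := l2norm_add_le _ _
    _ = l2norm (A.mulVec h)
        + l2norm (A.mulVec (∑ j ∈ Finset.Ico 1 L, _root_.restrict h (B j))) := by rw [l2norm_neg]
    _ ≤ 2 * ε + s1 * St := add_le_add hAh2ε hAt
  have hEbound : D * E ≤ 2 * ε + 2 * s1 * (Real.sqrt a * Real.sqrt (k:ℝ))⁻¹ * ξ := by
    have c1 : s2 * E ≤ 2 * ε + s1 * St := le_trans hlow hAh0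
    have c2 : s1 * St ≤ s1 * (γ / Real.sqrt a * E + 2 * (Real.sqrt a * Real.sqrt (k:ℝ))⁻¹ * ξ) :=
      mul_le_mul_of_nonneg_left htail2 hs1pos.le
    have hDE : D * E = s2 * E - γ / Real.sqrt a * s1 * E := by rw [hDdef]; ring
    have c2' : s1 * St ≤ s1 * (γ / Real.sqrt a * E) + s1 * (2 * (Real.sqrt a * Real.sqrt (k:ℝ))⁻¹ * ξ) := by
      calc s1 * St ≤ _ := c2
      _ = _ := by ring
    have hcomm : s1 * (γ / Real.sqrt a * E) = γ / Real.sqrt a * s1 * E := by ring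
    have hcomm2 : s1 * (2 * (Real.sqrt a * Real.sqrt (k:ℝ))⁻¹ * ξ)
        = 2 * s1 * (Real.sqrt a * Real.sqrt (k:ℝ))⁻¹ * ξ := by ring
    linarith
  have hEfinal : E ≤ (2 * ε + 2 * s1 * (Real.sqrt a * Real.sqrt (k:ℝ))⁻¹ * ξ) / D := by
    rw [le_div_iff₀ hD]
    calc E * D = D * E := mul_comm _ _
    _ ≤ _ := hEbound
  -- final assembly
  have hl2t : l2norm (∑ j ∈ Finset.Ico 1 L, _root_.restrict h (B j)) ≤ St := by
    refine le_trans (l2norm_sum_le _ _) ?_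
    rw [hStdef]
    exact le_of_eq (Finset.sum_congr rfl fun j _ => l2norm_restrict h (B j))
  have hfin1 : l2norm h ≤ E + St := by
    conv_lhs => rw [hdecomp]
    calc l2norm _ ≤ l2norm (_root_.restrict h (T0 ∪ B 0))
        + l2norm (∑ j ∈ Finset.Ico 1 L, _root_.restrict h (B j)) := l2norm_add_le _ _
    _ ≤ E + St := add_le_add (le_of_eq hEl2) hl2t
  have hfin2 : l2norm h ≤ (1 + γ / Real.sqrt a) * E + 2 * (Real.sqrt a * Real.sqrt (k:ℝ))⁻¹ * ξ := by
    have hexp : (1 + γ / Real.sqrt a) * E = E + γ / Real.sqrt a * E := by ring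
    linarith only [hfin1, htail2, hexp]
  have hrpow : (k:ℝ) ^ (-(1/2 : ℝ)) = (Real.sqrt (k:ℝ))⁻¹ := by
    rw [Real.rpow_neg (Nat.cast_nonneg k)]
    congr 1
    exact (Real.sqrt_eq_rpow _).symm
  rw [hrpow]
  have hres : l2norm h ≤ 2 * (1 + γ / Real.sqrt a) / D * ε
      + 2 * (Real.sqrt a)⁻¹ * (s2 + s1) / D * (Real.sqrt (k:ℝ))⁻¹ * ξ := by
    have hco : (0:ℝ) ≤ 1 + γ / Real.sqrt a := by positivity
    have hmul := mul_le_mul_of_nonneg_left hEfinal hco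
    have hs2eq : s2 = D + γ / Real.sqrt a * s1 := by rw [hDdef]; ring
    have heq := final_algebra ε ξ γ (Real.sqrt a) (Real.sqrt (k:ℝ)) s1 D hsa.ne' hsk.ne' hD.ne'
    rw [← hs2eq] at heq
    linarith only [hmul, heq, hfin2]
  exact hres
end BlocksMain
end

section
/- Fix a > 1, k ≥ 1, ρ > 0, 0 ≤ α ≤ 1, and nonnegative constants δ_{ak}, δ_{(a+1)k} < 1, and set γ(ω) = ω + (1−ω)·√(1+ρ−2αρ), C0′(ω) = 2(1 + γ(ω)/√a)/(√(1−δ_{(a+1)k}) − (γ(ω)/√a)·√(1+δ_{ak})), C1′(ω) = 2a^{−1/2}(√(1−δ_{(a+1)k}) + √(1+δ_{ak}))/(√(1−δ_{(a+1)k}) − (γ(ω)/√a)·√(1+δ_{ak})); let C0 and C1 be their values at ω = 1.] Suppose 0 ≤ ω < 1 and the denominators √(1−δ_{(a+1)k}) − (γ(ω)/√a)·√(1+δ_{ak}) and √(1−δ_{(a+1)k}) − (1/√a)·√(1+δ_{ak}) are positive. Then C0′(ω) < C0 and C1′(ω) < C1 if and only if α > 1/2. -/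
open scoped BigOperators

/-- Proposition, part (iii): for `0 ≤ ω < 1`, the weighted ℓ1 stability
constants are strictly smaller than the standard ℓ1 ones if and only if the support
estimate is more than 50% accurate, i.e. `α > 1/2`. -/
theorem constants_smaller_iff_alpha_gt_half
    (a ρ α δak δa1k ω : ℝ) (k : ℕ)
    (γ C0' C1' : ℝ → ℝ)
    (ha : 1 < a) (hk : 1 ≤ k)
    (hρ : 0 < ρ) (hα0 : 0 ≤ α) (hα1 : α ≤ 1)
    (hδak0 : 0 ≤ δak) (hδa1k0 : 0 ≤ δa1k)
    (hδak1 : δak < 1) (hδa1k1 : δa1k < 1)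
    (hγ : ∀ ω', γ ω' = ω' + (1 - ω') * Real.sqrt (1 + ρ - 2 * α * ρ))
    (hC0' : ∀ ω', C0' ω' =
      2 * (1 + γ ω' / Real.sqrt a) /
        (Real.sqrt (1 - δa1k) - (γ ω' / Real.sqrt a) * Real.sqrt (1 + δak)))
    (hC1' : ∀ ω', C1' ω' =
      2 * (Real.sqrt a)⁻¹ * (Real.sqrt (1 - δa1k) + Real.sqrt (1 + δak)) /
        (Real.sqrt (1 - δa1k) - (γ ω' / Real.sqrt a) * Real.sqrt (1 + δak)))
    (hω0 : 0 ≤ ω) (hω1 : ω < 1)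
    -- the denominators (at `ω` and at `1`) are positive
    (hdenω : 0 < Real.sqrt (1 - δa1k) - (γ ω / Real.sqrt a) * Real.sqrt (1 + δak))
    (hden1 : 0 < Real.sqrt (1 - δa1k) - (γ 1 / Real.sqrt a) * Real.sqrt (1 + δak)) :
    (C0' ω < C0' 1 ∧ C1' ω < C1' 1) ↔ 1 / 2 < α := by
  have hr : 0 < Real.sqrt a := Real.sqrt_pos.mpr (by linarith)
  have hs : 0 < Real.sqrt (1 - δa1k) := Real.sqrt_pos.mpr (by linarith)
  have ht : 0 < Real.sqrt (1 + δak) := Real.sqrt_pos.mpr (by linarith)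
  have hγ1 : γ 1 = 1 := by rw [hγ]; ring
  set r := Real.sqrt a with hrdef
  set s := Real.sqrt (1 - δa1k) with hsdef
  set t := Real.sqrt (1 + δak) with htdef
  have hgiff : γ ω < 1 ↔ 1 / 2 < α := by
    rw [hγ]
    constructor
    · intro h
      by_contra hle
      push_neg at hle
      have h1 : (1:ℝ) ≤ 1 + ρ - 2 * α * ρ := by nlinarith
      have h2 : (1:ℝ) ≤ Real.sqrt (1 + ρ - 2 * α * ρ) := by
        have := Real.sqrt_le_sqrt h1
        simpa using this
      nlinarith
    · intro h
      have h2 : Real.sqrt (1 + ρ - 2 * α * ρ) < 1 := by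
        rw [Real.sqrt_lt' one_pos]
        nlinarith
      nlinarith
  rw [hC0' ω, hC0' 1, hC1' ω, hC1' 1, hγ1] at *
  rw [← hgiff]
  set g := γ ω with hgdef
  have hu : 0 < r⁻¹ := inv_pos.mpr hr
  have hgr : g / r = g * r⁻¹ := div_eq_mul_inv g r
  have h1r : (1:ℝ) / r = 1 * r⁻¹ := by ring
  rw [hgr] at hdenω
  rw [h1r] at hden1
  rw [hgr, h1r]
  have hN : 0 < 2 * r⁻¹ * (s + t) := by positivity
  constructor
  · rintro ⟨h0, h1⟩
    by_contra hg
    push_neg at hg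
    -- then denominators ordered the other way; contradict h1
    have hD : s - g * r⁻¹ * t ≤ s - 1 * r⁻¹ * t := by
      nlinarith [mul_nonneg (mul_nonneg (by linarith : (0:ℝ) ≤ g - 1) hu.le) ht.le]
    have : 2 * r⁻¹ * (s + t) / (s - 1 * r⁻¹ * t) ≤ 2 * r⁻¹ * (s + t) / (s - g * r⁻¹ * t) :=
      div_le_div_of_nonneg_left hN.le hdenω hD
    linarith
  · intro hg
    have hD : s - 1 * r⁻¹ * t < s - g * r⁻¹ * t := by
      nlinarith [mul_pos (mul_pos (by linarith : (0:ℝ) < 1 - g) hu) ht]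
    constructor
    · rw [div_lt_div_iff₀ hdenω hden1]
      nlinarith [mul_pos (mul_pos hu (add_pos hs ht)) (by linarith : (0:ℝ) < 1 - g)]
    · exact div_lt_div_of_pos_left hN hden1 hD
end

section
/- Let x, h ∈ ℝ^N, let T0, T̃ ⊆ {1,…,N}, and let 0 ≤ ω ≤ 1. Define the weight vector w by w_i = ω for i ∈ T̃ and w_i = 1 for i ∈ T̃ᶜ. If ‖x + h‖_{1,w} ≤ ‖x‖_{1,w}, then ω·‖h_{T0ᶜ}‖₁ + (1−ω)·‖h_{T̃ᶜ∩T0ᶜ}‖₁ ≤ ω·‖h_{T0}‖₁ + (1−ω)·‖h_{T̃ᶜ∩T0}‖₁ + 2·(ω·‖x_{T0ᶜ}‖₁ + (1−ω)·‖x_{T̃ᶜ∩T0ᶜ}‖₁). -/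
open scoped BigOperators

/-- the weighted ℓ1 cone constraint implies the basic inequality
relating the pieces of `h` and `x` on `T0`, `T0ᶜ`, and the support estimate `Tt`. -/
theorem weighted_cone_inequality
    {N : ℕ} (x h : Fin N → ℝ) (T0 Tt : Finset (Fin N)) (ω : ℝ) (w : Fin N → ℝ)
    (hω0 : 0 ≤ ω) (hω1 : ω ≤ 1)
    (hw : ∀ i, w i = if i ∈ Tt then ω else 1)
    (hcone : wl1norm w (x + h) ≤ wl1norm w x) :
    ω * l1norm (restrict h T0ᶜ) + (1 - ω) * l1norm (restrict h (Ttᶜ ∩ T0ᶜ)) ≤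
      ω * l1norm (restrict h T0) + (1 - ω) * l1norm (restrict h (Ttᶜ ∩ T0))
        + 2 * (ω * l1norm (restrict x T0ᶜ) + (1 - ω) * l1norm (restrict x (Ttᶜ ∩ T0ᶜ))) := by
  have hwnn : ∀ i, 0 ≤ w i := by
    intro i; rw [hw i]; split <;> norm_num [hω0]
  have key : ∀ (v : Fin N → ℝ) (S : Finset (Fin N)),
      ω * l1norm (restrict v S) + (1 - ω) * l1norm (restrict v (Ttᶜ ∩ S)) =
        ∑ i, (if i ∈ S then w i * |v i| else 0) := by
    intro v S
    simp only [l1norm, restrict, Finset.mul_sum, ← Finset.sum_add_distrib]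
    refine Finset.sum_congr rfl fun i _ => ?_
    rw [hw i]
    by_cases hS : i ∈ S <;> by_cases hT : i ∈ Tt <;>
      simp [hS, hT, Finset.mem_inter] <;> ring
  rw [key h, key h, key x]
  have hstep : ∑ i, (if i ∈ T0ᶜ then w i * |h i| else 0) ≤
      ∑ i, ((if i ∈ T0 then w i * |h i| else 0) + 2 * (if i ∈ T0ᶜ then w i * |x i| else 0)
        + (w i * |(x + h) i| - w i * |x i|)) := by
    refine Finset.sum_le_sum fun i _ => ?_
    have hnn := hwnn i
    have habs1 : |h i| ≤ |x i| + |x i + h i| := by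
      have := abs_sub_abs_le_abs_sub (x i + h i) (x i)
      have h2 := abs_add_le (x i) (h i)
      cases abs_cases (x i + h i) <;> cases abs_cases (x i) <;> cases abs_cases (h i) <;> linarith
    have habs2 : |x i| ≤ |h i| + |x i + h i| := by
      cases abs_cases (x i + h i) <;> cases abs_cases (x i) <;> cases abs_cases (h i) <;> linarith
    simp only [Pi.add_apply, Finset.mem_compl]
    by_cases hT0 : i ∈ T0 <;> simp [hT0] <;> nlinarith [mul_le_mul_of_nonneg_left habs1 hnn,
      mul_le_mul_of_nonneg_left habs2 hnn]
  have hc : (∑ i, w i * |(x + h) i|) - (∑ i, w i * |x i|) ≤ 0 := by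
    have := hcone; simp only [wl1norm] at this; linarith
  calc ∑ i, (if i ∈ T0ᶜ then w i * |h i| else 0)
      ≤ ∑ i, ((if i ∈ T0 then w i * |h i| else 0) + 2 * (if i ∈ T0ᶜ then w i * |x i| else 0)
        + (w i * |(x + h) i| - w i * |x i|)) := hstep
    _ = (∑ i, (if i ∈ T0 then w i * |h i| else 0))
        + 2 * (∑ i, (if i ∈ T0ᶜ then w i * |x i| else 0))
        + ((∑ i, w i * |(x + h) i|) - (∑ i, w i * |x i|)) := by
        rw [Finset.sum_add_distrib, Finset.sum_add_distrib, Finset.sum_sub_distrib,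
          Finset.mul_sum]
    _ ≤ _ := by linarith
end

section
/- Let x, h ∈ ℝ^N, let T0, T̃ ⊆ {1,…,N}, let T̃_α = T0 ∩ T̃, and let 0 ≤ ω ≤ 1. Define weights w_i = ω for i ∈ T̃ and w_i = 1 for i ∈ T̃ᶜ. If ‖x + h‖_{1,w} ≤ ‖x‖_{1,w}, then ‖h_{T0ᶜ}‖₁ ≤ ω·‖h_{T0}‖₁ + (1−ω)·‖h_{(T0 ∪ T̃)∖T̃_α}‖₁ + 2·(ω·‖x_{T0ᶜ}‖₁ + (1−ω)·‖x_{T̃ᶜ∩T0ᶜ}‖₁). -/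
open scoped BigOperators

/-- the weighted ℓ1 cone constraint implies the bound (9) of the paper on
`‖h_{T0ᶜ}‖₁`, where `T̃_α = T0 ∩ T̃`. -/
theorem weighted_cone_hT0c_bound
    {N : ℕ} (x h : Fin N → ℝ) (T0 Tt : Finset (Fin N)) (ω : ℝ) (w : Fin N → ℝ)
    (hω0 : 0 ≤ ω) (hω1 : ω ≤ 1)
    (hw : ∀ i, w i = if i ∈ Tt then ω else 1)
    (hcone : wl1norm w (x + h) ≤ wl1norm w x) :
    l1norm (restrict h T0ᶜ) ≤
      ω * l1norm (restrict h T0)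
        + (1 - ω) * l1norm (restrict h ((T0 ∪ Tt) \ (T0 ∩ Tt)))
        + 2 * (ω * l1norm (restrict x T0ᶜ) + (1 - ω) * l1norm (restrict x (Ttᶜ ∩ T0ᶜ))) := by
  have key : ∀ i : Fin N, |restrict h T0ᶜ i| ≤
      ω * |restrict h T0 i| + (1 - ω) * |restrict h ((T0 ∪ Tt) \ (T0 ∩ Tt)) i|
        + 2 * (ω * |restrict x T0ᶜ i| + (1 - ω) * |restrict x (Ttᶜ ∩ T0ᶜ) i|)
        + (w i * |x i + h i| - w i * |x i|) := by
    intro i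
    have ha : |h i| ≤ |x i + h i| + |x i| := by
      calc |h i| = |(x i + h i) + (-(x i))| := by ring_nf
      _ ≤ |x i + h i| + |(-(x i))| := abs_add_le _ _
      _ = |x i + h i| + |x i| := by rw [abs_neg]
    have hb : |x i| ≤ |x i + h i| + |h i| := by
      calc |x i| = |(x i + h i) + (-(h i))| := by ring_nf
      _ ≤ |x i + h i| + |(-(h i))| := abs_add_le _ _
      _ = |x i + h i| + |h i| := by rw [abs_neg]
    simp only [restrict, hw, Finset.mem_compl, Finset.mem_sdiff, Finset.mem_union,
      Finset.mem_inter]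
    by_cases hT0 : i ∈ T0 <;> by_cases hTt : i ∈ Tt <;>
      simp [hT0, hTt] <;>
      nlinarith [abs_nonneg (h i), abs_nonneg (x i), abs_nonneg (x i + h i)]
  have hsum : l1norm (restrict h T0ᶜ) ≤
      ω * l1norm (restrict h T0)
        + (1 - ω) * l1norm (restrict h ((T0 ∪ Tt) \ (T0 ∩ Tt)))
        + 2 * (ω * l1norm (restrict x T0ᶜ) + (1 - ω) * l1norm (restrict x (Ttᶜ ∩ T0ᶜ)))
        + (wl1norm w (x + h) - wl1norm w x) := by
    simp only [l1norm, wl1norm, Finset.mul_sum, ← Finset.sum_sub_distrib,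
      ← Finset.sum_add_distrib]
    refine Finset.sum_le_sum fun i _ => ?_
    have := key i
    simp only [Pi.add_apply] at this ⊢
    linarith
  linarith
end
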